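/- Let j be an integer with j > 1 and let p = 2j/(2j-1). Let f ∈ L^p, let g be a trigonometric polynomial whose Fourier coefficients ĝ(n) are all real and nonnegative, and let c = (c_n)_{n∈ℤ} be a bounded sequence such that |c_n| ≤ |f̂(n)| at every integer n with ĝ(n) ≠ 0. Then ∑_n ĝ(n)|c_n| ≤ ‖g‖_{2j} ‖f‖_p. -/

import Mathlib

open MeasureTheory Complex
open scoped Real ENNReal

noncomputable section

instance : Fact (0 < 2 * Real.pi) := ⟨by positivity⟩

abbrev Circle2Pi := AddCircle (2 * Real.pi)

abbrev circleMeasure : Measure Circle2Pi := AddCircle.haarAddCircle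

/-- A trigonometric polynomial: a finite linear combination of the exponentials `e^{inθ}`. -/
def IsTrigPoly (g : Circle2Pi → ℂ) : Prop :=
  ∃ (s : Finset ℤ) (a : ℤ → ℂ), ∀ x, g x = ∑ n ∈ s, a n * fourier n x

lemma integral_fourier_circle (k : ℤ) :
    ∫ x : Circle2Pi, fourier k x ∂circleMeasure = if k = 0 then 1 else 0 := by
  split_ifs with h
  · subst h
    have : ⇑(fourier 0 : C(Circle2Pi, ℂ)) = fun _ => (1 : ℂ) := by
      ext x; exact fourier_zero
    rw [this]; simp
  · exact integral_eq_zero_of_add_right_eq_neg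
      (fourier_add_half_inv_index h (by positivity))

lemma cont_memLp {F : Circle2Pi → ℂ} (h : Continuous F) (p : ℝ≥0∞) :
    MemLp F p circleMeasure :=
  MemLp.of_bound h.aestronglyMeasurable ‖(⟨F, h⟩ : C(Circle2Pi, ℂ))‖
    (Filter.Eventually.of_forall fun x =>
      ContinuousMap.norm_coe_le_norm (⟨F, h⟩ : C(Circle2Pi, ℂ)) x)

lemma cont_integrable {F : Circle2Pi → ℂ} (h : Continuous F) :
    Integrable F circleMeasure :=
  (cont_memLp h 1).integrable le_rfl

lemma fourierCoeff_expansion {ι : Type*} (t : Finset ι) (d : ι → ℂ) (k : ι → ℤ) (n : ℤ) :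
    fourierCoeff (fun x : Circle2Pi => ∑ i ∈ t, d i * fourier (k i) x) n
      = ∑ i ∈ t, if k i = n then d i else 0 := by
  rw [fourierCoeff]
  simp_rw [smul_eq_mul, Finset.mul_sum]
  rw [integral_finset_sum]
  · refine Finset.sum_congr rfl fun i _ => ?_
    have : ∀ x : Circle2Pi, fourier (-n) x * (d i * fourier (k i) x)
        = d i * fourier (-n + k i) x := by
      intro x; rw [fourier_add]; ring
    simp_rw [this]
    rw [integral_const_mul, integral_fourier_circle]
    by_cases h : k i = n
    · have h' : -n + k i = 0 := by omega
      simp [h, h']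
    · have h' : ¬(-n + k i = 0) := by omega
      simp [h, h']
  · intro i _
    exact cont_integrable ((fourier (-n)).continuous.mul
      (continuous_const.mul (fourier (k i)).continuous))


lemma fourier_sum_eq {ι : Type*} (t : Finset ι) (k : ι → ℤ) (x : Circle2Pi) :
    (fourier (∑ i ∈ t, k i) x : ℂ) = ∏ i ∈ t, fourier (k i) x := by
  induction t using Finset.cons_induction with
  | empty => simp [fourier_zero]
  | cons i t hi ih => rw [Finset.sum_cons, Finset.prod_cons, fourier_add, ih]

lemma parseval_cont (F : C(Circle2Pi, ℂ)) :
    ∑' n : ℤ, ‖fourierCoeff (⇑F) n‖ ^ 2 = ∫ x, ‖F x‖ ^ 2 ∂circleMeasure := by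
  have h := tsum_sq_fourierCoeff
    (ContinuousMap.toLp (E := ℂ) 2 AddCircle.haarAddCircle ℂ F)
  simp_rw [fourierCoeff_toLp] at h
  rw [h]
  refine integral_congr_ae ?_
  filter_upwards [ContinuousMap.coeFn_toLp (p := 2) (μ := AddCircle.haarAddCircle) (𝕜 := ℂ) F] with x hx
  rw [hx]

lemma pow_sum_expand (s : Finset ℤ) (d : ℤ → ℂ) (j : ℕ) (x : Circle2Pi) :
    (∑ m ∈ s, d m * fourier m x) ^ j
      = ∑ t ∈ Fintype.piFinset (fun _ : Fin j => s),
          (∏ i, d (t i)) * fourier (∑ i, t i) x := by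
  have h1 : (∑ m ∈ s, d m * fourier m x) ^ j
      = ∏ _i : Fin j, (∑ m ∈ s, d m * fourier m x) := by
    rw [Finset.prod_const, Finset.card_univ, Fintype.card_fin]
  rw [h1, Finset.prod_univ_sum]
  refine Finset.sum_congr rfl fun t _ => ?_
  rw [fourier_sum_eq, Finset.prod_mul_distrib]

lemma fourierCoeff_pow (s : Finset ℤ) (d : ℤ → ℂ) (j : ℕ) (n : ℤ) :
    fourierCoeff (fun x : Circle2Pi => (∑ m ∈ s, d m * fourier m x) ^ j) n
      = ∑ t ∈ Fintype.piFinset (fun _ : Fin j => s),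
          if (∑ i, t i) = n then (∏ i, d (t i)) else 0 := by
  simp_rw [pow_sum_expand]
  exact fourierCoeff_expansion _ _ _ n

lemma coeff_pow_le (s : Finset ℤ) (A : ℤ → ℝ) (hA0 : ∀ n, 0 ≤ A n) (u : ℤ → ℂ)
    (hu : ∀ n, ‖u n‖ ≤ 1) (j : ℕ) (n : ℤ) :
    ‖fourierCoeff (fun x : Circle2Pi => (∑ m ∈ s, ((A m : ℂ) * u m) * fourier m x) ^ j) n‖
      ≤ ‖fourierCoeff (fun x : Circle2Pi => (∑ m ∈ s, (A m : ℂ) * fourier m x) ^ j) n‖ := by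
  rw [fourierCoeff_pow, fourierCoeff_pow]
  have hRHS : (∑ t ∈ Fintype.piFinset (fun _ : Fin j => s),
      if (∑ i, t i) = n then (∏ i, ((A (t i) : ℂ))) else 0)
      = (((∑ t ∈ Fintype.piFinset (fun _ : Fin j => s),
          if (∑ i, t i) = n then (∏ i, A (t i)) else 0 : ℝ)) : ℂ) := by
    push_cast
    refine Finset.sum_congr rfl fun t _ => ?_
    rw [apply_ite (Complex.ofReal)]
    push_cast
    rfl
  rw [hRHS]
  have hnonneg : (0 : ℝ) ≤ ∑ t ∈ Fintype.piFinset (fun _ : Fin j => s),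
      if (∑ i, t i) = n then (∏ i, A (t i)) else 0 := by
    refine Finset.sum_nonneg fun t _ => ?_
    split_ifs
    · exact Finset.prod_nonneg fun i _ => hA0 _
    · exact le_refl 0
  rw [Complex.norm_real, Real.norm_of_nonneg hnonneg]
  calc ‖∑ t ∈ Fintype.piFinset (fun _ : Fin j => s),
      if (∑ i, t i) = n then (∏ i, ((A (t i) : ℂ) * u (t i))) else 0‖
      ≤ ∑ t ∈ Fintype.piFinset (fun _ : Fin j => s),
        ‖if (∑ i, t i) = n then (∏ i, ((A (t i) : ℂ) * u (t i))) else 0‖ :=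
      norm_sum_le _ _
    _ ≤ ∑ t ∈ Fintype.piFinset (fun _ : Fin j => s),
        if (∑ i, t i) = n then (∏ i, A (t i)) else 0 := by
      refine Finset.sum_le_sum fun t _ => ?_
      split_ifs
      · rw [norm_prod]
        refine Finset.prod_le_prod (fun i _ => norm_nonneg _) fun i _ => ?_
        rw [norm_mul, Complex.norm_real, Real.norm_of_nonneg (hA0 _)]
        calc A (t i) * ‖u (t i)‖ ≤ A (t i) * 1 :=
          mul_le_mul_of_nonneg_left (hu _) (hA0 _)
        _ = A (t i) := mul_one _
      · simp

lemma trig_sum_continuous (s : Finset ℤ) (d : ℤ → ℂ) :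
    Continuous (fun x : Circle2Pi => ∑ m ∈ s, d m * fourier m x) :=
  continuous_finset_sum _ fun m _ => continuous_const.mul (fourier m).continuous

lemma integral_pow2j_le (s : Finset ℤ) (A : ℤ → ℝ) (hA0 : ∀ n, 0 ≤ A n) (u : ℤ → ℂ)
    (hu : ∀ n, ‖u n‖ ≤ 1) (j : ℕ) :
    ∫ x, ‖∑ m ∈ s, ((A m : ℂ) * u m) * fourier m x‖ ^ (2 * j) ∂circleMeasure
      ≤ ∫ x, ‖∑ m ∈ s, (A m : ℂ) * fourier m x‖ ^ (2 * j) ∂circleMeasure := by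
  have key : ∀ (d : ℤ → ℂ) (x : Circle2Pi),
      ‖∑ m ∈ s, d m * fourier m x‖ ^ (2 * j)
        = ‖(∑ m ∈ s, d m * fourier m x) ^ j‖ ^ 2 := by
    intro d x
    rw [norm_pow, ← pow_mul, Nat.mul_comm j 2]
  simp_rw [key]
  have cont1 : Continuous (fun x : Circle2Pi =>
      (∑ m ∈ s, ((A m : ℂ) * u m) * fourier m x) ^ j) :=
    (trig_sum_continuous s _).pow j
  have cont2 : Continuous (fun x : Circle2Pi =>
      (∑ m ∈ s, (A m : ℂ) * fourier m x) ^ j) :=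
    (trig_sum_continuous s _).pow j
  have p1 := parseval_cont ⟨_, cont1⟩
  have p2 := parseval_cont ⟨_, cont2⟩
  simp only [ContinuousMap.coe_mk] at p1 p2
  rw [← p1, ← p2]
  set T : Finset ℤ :=
    (Fintype.piFinset (fun _ : Fin j => s)).image (fun t => ∑ i, t i) with hT
  have hvanish : ∀ (d : ℤ → ℂ) (n : ℤ), n ∉ T →
      fourierCoeff (fun x : Circle2Pi => (∑ m ∈ s, d m * fourier m x) ^ j) n = 0 := by
    intro d n hn
    rw [fourierCoeff_pow]
    refine Finset.sum_eq_zero fun t ht => ?_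
    rw [if_neg]
    intro h
    exact hn (Finset.mem_image.mpr ⟨t, ht, h⟩)
  refine Summable.tsum_le_tsum (fun n => ?_) ?_ ?_
  · exact pow_le_pow_left₀ (norm_nonneg _) (coeff_pow_le s A hA0 u hu j n) 2
  · refine summable_of_ne_finset_zero (s := T) fun n hn => ?_
    rw [hvanish _ n hn]
    simp
  · refine summable_of_ne_finset_zero (s := T) fun n hn => ?_
    rw [hvanish _ n hn]
    simp

/-- for `p = 2j/(2j-1)` with integer `j > 1`, if `g` is a trigonometric
polynomial with nonnegative real Fourier coefficients and `|c n| ≤ |f̂(n)|` wherever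
`ĝ(n) ≠ 0`, then `∑ₙ ĝ(n) |c n| ≤ ‖g‖_{2j} ‖f‖_p`. -/
theorem key_bilinear_inequality (j : ℕ) (hj : 1 < j)
    (p : ℝ≥0∞) (hp : p = (2 * j : ℝ≥0∞) / (2 * j - 1))
    (f : Circle2Pi → ℂ) (hf : MemLp f p circleMeasure)
    (g : Circle2Pi → ℂ) (hg : IsTrigPoly g)
    (hgpos : ∀ n : ℤ, (fourierCoeff g n).im = 0 ∧ 0 ≤ (fourierCoeff g n).re)
    (c : ℤ → ℂ) (hbdd : ∃ M : ℝ, ∀ n : ℤ, ‖c n‖ ≤ M)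
    (hcf : ∀ n : ℤ, fourierCoeff g n ≠ 0 →
      ‖c n‖ ≤ ‖fourierCoeff f n‖) :
    ∑' n : ℤ, (fourierCoeff g n).re * ‖c n‖ ≤
      (eLpNorm g (2 * j : ℝ≥0∞) circleMeasure).toReal *
        (eLpNorm f p circleMeasure).toReal := by
  obtain ⟨s, a, hga⟩ := hg
  set A : ℤ → ℝ := fun n => (fourierCoeff g n).re with hA
  have hAc : ∀ n, fourierCoeff g n = ((A n : ℝ) : ℂ) := by
    intro n
    apply Complex.ext
    · simp [hA]
    · simp [hA, (hgpos n).1]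
  have hA0 : ∀ n, 0 ≤ A n := fun n => (hgpos n).2
  have hgc : ∀ n, fourierCoeff g n = if n ∈ s then a n else 0 := by
    intro n
    have hgfun : g = fun x => ∑ i ∈ s, a i * fourier (id i) x := funext hga
    rw [hgfun, fourierCoeff_expansion s a id n]
    simp [Finset.sum_ite_eq' s n a]
  have hAoff : ∀ n ∉ s, A n = 0 := by
    intro n hn
    have := (hAc n).symm.trans (hgc n)
    rw [if_neg hn] at this
    exact_mod_cast this
  have hgA : g = fun x => ∑ n ∈ s, ((A n : ℝ) : ℂ) * fourier n x := by
    funext x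
    rw [hga x]
    refine Finset.sum_congr rfl fun n hn => ?_
    rw [← hAc n, hgc n, if_pos hn]
  -- phases
  set u : ℤ → ℂ := fun n => if fourierCoeff f n = 0 then 1
    else fourierCoeff f n / (‖fourierCoeff f n‖ : ℂ) with hu
  have hu1 : ∀ n, ‖u n‖ ≤ 1 := by
    intro n
    by_cases h : fourierCoeff f n = 0
    · simp [hu, h]
    · rw [hu]
      simp only [h, if_false, norm_div, Complex.norm_real, norm_norm]
      rw [div_self (by simpa using h)]
  have huf : ∀ n, (starRingEnd ℂ) (u n) * fourierCoeff f n
      = ((‖fourierCoeff f n‖ : ℝ) : ℂ) := by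
    intro n
    by_cases h : fourierCoeff f n = 0
    · simp [hu, h]
    · have habs : (‖fourierCoeff f n‖ : ℂ) ≠ 0 := by
        simpa using h
      rw [hu]
      simp only [h, if_false]
      rw [map_div₀, Complex.conj_ofReal, div_mul_eq_mul_div, mul_comm,
        Complex.mul_conj, Complex.normSq_eq_norm_sq]
      push_cast
      rw [sq, mul_div_assoc, div_self habs, mul_one]
  set b : ℤ → ℂ := fun n => ((A n : ℝ) : ℂ) * u n with hb
  set gt : Circle2Pi → ℂ := fun x => ∑ n ∈ s, b n * fourier n x with hgt
  have hgtcont : Continuous gt := trig_sum_continuous s b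
  have hgcont : Continuous g := by rw [hgA]; exact trig_sum_continuous s _
  -- exponents
  set qr : ℝ := ((2 * j : ℕ) : ℝ) with hqr
  have hqr1 : 1 < qr := by
    rw [hqr]; exact_mod_cast Nat.lt_of_lt_of_le hj (by omega)
  set pr : ℝ := qr / (qr - 1) with hpr
  have hpq : qr.HolderConjugate pr := Real.HolderConjugate.conjExponent hqr1
  have hq2 : (2 * j : ℝ≥0∞) = ENNReal.ofReal qr := by
    rw [hqr, ENNReal.ofReal_natCast]
    push_cast
    ring
  have hpof : p = ENNReal.ofReal pr := by
    rw [hp, hpr, ENNReal.ofReal_div_of_pos (by linarith : (0:ℝ) < qr - 1), ← hq2]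
    congr 1
    have h2 : qr - 1 = ((2 * j - 1 : ℕ) : ℝ) := by
      rw [hqr]
      push_cast [Nat.cast_sub (by omega : 1 ≤ 2 * j)]
      ring
    rw [h2, ENNReal.ofReal_natCast, ENNReal.natCast_sub]
    push_cast
    ring
  have hp1 : 1 ≤ p := by
    rw [hpof]
    rw [show (1 : ℝ≥0∞) = ENNReal.ofReal 1 by simp]
    exact ENNReal.ofReal_le_ofReal hpq.symm.lt.le
  have hfint : Integrable f circleMeasure := hf.integrable hp1
  -- integral identity
  have hfourint : ∀ n : ℤ, Integrable (fun x => fourier (-n) x * f x) circleMeasure := by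
    intro n
    exact hfint.bdd_mul (fourier (-n)).continuous.aestronglyMeasurable
      (c := 1) (Filter.Eventually.of_forall fun x => by simp [Circle.norm_coe])
  have hI : ∫ x, (starRingEnd ℂ) (gt x) * f x ∂circleMeasure
      = ∑ n ∈ s, (starRingEnd ℂ) (b n) * fourierCoeff f n := by
    have heq : ∀ x, (starRingEnd ℂ) (gt x) * f x
        = ∑ n ∈ s, (starRingEnd ℂ) (b n) * (fourier (-n) x * f x) := by
      intro x
      rw [hgt]
      simp only [map_sum, map_mul, Finset.sum_mul]
      refine Finset.sum_congr rfl fun n _ => ?_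
      rw [← fourier_neg]
      ring
    simp_rw [heq]
    rw [integral_finset_sum]
    · refine Finset.sum_congr rfl fun n _ => ?_
      rw [integral_const_mul]
      congr 1
    · exact fun n _ => (hfourint n).const_mul _
  have hsum2 : ∑ n ∈ s, (starRingEnd ℂ) (b n) * fourierCoeff f n
      = (((∑ n ∈ s, A n * ‖fourierCoeff f n‖ : ℝ)) : ℂ) := by
    push_cast
    refine Finset.sum_congr rfl fun n _ => ?_
    rw [hb]
    simp only [map_mul, Complex.conj_ofReal]
    rw [mul_assoc, huf n]
  -- step 1 : LHS tsum to finite sum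
  have hlhs : ∑' n : ℤ, (fourierCoeff g n).re * ‖c n‖
      = ∑ n ∈ s, A n * ‖c n‖ := by
    refine tsum_eq_sum fun n hn => ?_
    rw [show (fourierCoeff g n).re = A n from rfl, hAoff n hn, zero_mul]
  -- step 2
  have hstep2 : ∑ n ∈ s, A n * ‖c n‖
      ≤ ∑ n ∈ s, A n * ‖fourierCoeff f n‖ := by
    refine Finset.sum_le_sum fun n _ => ?_
    by_cases h : A n = 0
    · rw [h, zero_mul, zero_mul]
    · have hgn : fourierCoeff g n ≠ 0 := by
        rw [hAc n]
        exact_mod_cast h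
      exact mul_le_mul_of_nonneg_left (hcf n hgn) (hA0 n)
  -- step 3 : to integral
  have hstep3 : ∑ n ∈ s, A n * ‖fourierCoeff f n‖
      ≤ ∫ x, ‖gt x‖ * ‖f x‖ ∂circleMeasure := by
    have h1 : ∑ n ∈ s, A n * ‖fourierCoeff f n‖
        = (∫ x, (starRingEnd ℂ) (gt x) * f x ∂circleMeasure).re := by
      rw [hI, hsum2, Complex.ofReal_re]
    rw [h1]
    calc (∫ x, (starRingEnd ℂ) (gt x) * f x ∂circleMeasure).re
        ≤ ‖∫ x, (starRingEnd ℂ) (gt x) * f x ∂circleMeasure‖ := Complex.re_le_norm _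
      _ ≤ ∫ x, ‖(starRingEnd ℂ) (gt x) * f x‖ ∂circleMeasure :=
          norm_integral_le_integral_norm _
      _ = ∫ x, ‖gt x‖ * ‖f x‖ ∂circleMeasure := by
          refine integral_congr_ae (Filter.Eventually.of_forall fun x => ?_)
          show ‖(starRingEnd ℂ) (gt x) * f x‖ = ‖gt x‖ * ‖f x‖
          rw [norm_mul, RCLike.norm_conj]
  -- step 4 : Hölder
  have hgtmem : MemLp gt (ENNReal.ofReal qr) circleMeasure := cont_memLp hgtcont _
  have hfmem : MemLp f (ENNReal.ofReal pr) circleMeasure := by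
    rw [← hpof]; exact hf
  have hholder := integral_mul_norm_le_Lp_mul_Lq (μ := circleMeasure) hpq hgtmem hfmem
  -- step 5 : gt norm le g norm
  have hp0 : p ≠ 0 := by
    rw [hpof]
    simp only [ne_eq, ENNReal.ofReal_eq_zero, not_le]
    exact hpq.symm.pos
  have hptop : p ≠ ⊤ := by rw [hpof]; exact ENNReal.ofReal_ne_top
  have hptoReal : p.toReal = pr := by
    rw [hpof, ENNReal.toReal_ofReal hpq.symm.nonneg]
  have hfe : (eLpNorm f p circleMeasure).toReal
      = (∫ x, ‖f x‖ ^ pr ∂circleMeasure) ^ (1 / pr) := by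
    rw [hf.eLpNorm_eq_integral_rpow_norm hp0 hptop, hptoReal,
      ENNReal.toReal_ofReal (Real.rpow_nonneg
        (integral_nonneg fun x => Real.rpow_nonneg (norm_nonneg _) _) _), one_div]
  have hq20 : (2 * j : ℝ≥0∞) ≠ 0 := by
    simp only [ne_eq, mul_eq_zero, not_or]
    refine ⟨by norm_num, ?_⟩
    exact_mod_cast (by omega : j ≠ 0)
  have hq2top : (2 * j : ℝ≥0∞) ≠ ⊤ := by
    rw [hq2]; exact ENNReal.ofReal_ne_top
  have hq2toReal : (2 * j : ℝ≥0∞).toReal = qr := by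
    rw [hq2, ENNReal.toReal_ofReal hpq.nonneg]
  have hgmem : MemLp g (2 * j : ℝ≥0∞) circleMeasure := cont_memLp hgcont _
  have hge : (eLpNorm g (2 * j : ℝ≥0∞) circleMeasure).toReal
      = (∫ x, ‖g x‖ ^ qr ∂circleMeasure) ^ (1 / qr) := by
    rw [hgmem.eLpNorm_eq_integral_rpow_norm hq20 hq2top, hq2toReal,
      ENNReal.toReal_ofReal (Real.rpow_nonneg
        (integral_nonneg fun x => Real.rpow_nonneg (norm_nonneg _) _) _), one_div]
  have hIntcmp : ∫ x, ‖gt x‖ ^ qr ∂circleMeasure ≤ ∫ x, ‖g x‖ ^ qr ∂circleMeasure := by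
    have hconv : ∀ (F : Circle2Pi → ℂ) (x : Circle2Pi),
        ‖F x‖ ^ qr = ‖F x‖ ^ (2 * j : ℕ) := by
      intro F x
      rw [hqr, Real.rpow_natCast]
    simp_rw [hconv gt, hconv g, hgt, hgA, hb]
    exact integral_pow2j_le s A hA0 u hu1 j
  have hgtle : (∫ x, ‖gt x‖ ^ qr ∂circleMeasure) ^ (1 / qr)
      ≤ (eLpNorm g (2 * j : ℝ≥0∞) circleMeasure).toReal := by
    rw [hge]
    exact Real.rpow_le_rpow
      (integral_nonneg fun x => Real.rpow_nonneg (norm_nonneg _) _) hIntcmp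
      (by positivity)
  -- assemble
  rw [hlhs]
  calc ∑ n ∈ s, A n * ‖c n‖
      ≤ ∑ n ∈ s, A n * ‖fourierCoeff f n‖ := hstep2
    _ ≤ ∫ x, ‖gt x‖ * ‖f x‖ ∂circleMeasure := hstep3
    _ ≤ (∫ x, ‖gt x‖ ^ qr ∂circleMeasure) ^ (1 / qr)
        * (∫ x, ‖f x‖ ^ pr ∂circleMeasure) ^ (1 / pr) := hholder
    _ ≤ (eLpNorm g (2 * j : ℝ≥0∞) circleMeasure).toReal
        * (eLpNorm f p circleMeasure).toReal := by
      rw [hfe]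
      exact mul_le_mul_of_nonneg_right hgtle
        (Real.rpow_nonneg
          (integral_nonneg fun x => Real.rpow_nonneg (norm_nonneg _) _) _)
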